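/- With λ and L(λ) as above (parts of λ in {k,...,k+p}), the number of domino tabloids d_{λ, L(λ)} of shape λ and type L(λ) is nonzero, and L(λ) is the lexicographically largest partition μ with all parts at most p+1 such that d_{λ,μ} ≠ 0. -/

import Mathlib

/-- `dominoCount l μ` counts domino tabloids of shape `l` and type `μ`: choices of a
composition (ordered list of positive domino lengths) for each row of `l` whose total
multiset of lengths is `μ`. -/
noncomputable def dominoCount (l : List ℕ) (μ : Multiset ℕ) : ℕ :=
  Nat.card {c : List (List ℕ) //
    List.Forall₂ (fun comp row => (∀ x ∈ comp, 0 < x) ∧ comp.sum = row) c l ∧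
    (↑c.flatten : Multiset ℕ) = μ}

/-- `L(λ)` for a partition with parts in `{k,...,k+p}`. -/
def Lmap (p : ℕ) (lam : Multiset ℕ) : Multiset ℕ :=
  Multiset.replicate ((lam.map (· / (p + 1))).sum) (p + 1) +
    (lam.map (· % (p + 1))).filter (· ≠ 0)

/-- The parts of a multiset listed in weakly decreasing order. -/
def descSort (μ : Multiset ℕ) : List ℕ := (μ.sort (· ≤ ·)).reverse

namespace Stmt6Aux

/-- greedy splitting of `n` into parts of size `m` plus remainder -/
def greedy (m n : ℕ) : Multiset ℕ :=
  Multiset.replicate (n / m) m + if n % m = 0 then 0 else {n % m}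

/-- `μ` is (weakly) below `ν` in the "count from the top" order. -/
def Rrel (μ ν : Multiset ℕ) : Prop :=
  μ = ν ∨ ∃ v, μ.count v < ν.count v ∧ ∀ u, v < u → μ.count u = ν.count u

lemma Rrel.add {μ μ' ν ν' : Multiset ℕ} (h1 : Rrel μ μ') (h2 : Rrel ν ν') :
    Rrel (μ + ν) (μ' + ν') := by
  rcases h1 with rfl | ⟨v1, hv1, ha1⟩
  · rcases h2 with rfl | ⟨v2, hv2, ha2⟩
    · exact Or.inl rfl
    · refine Or.inr ⟨v2, ?_, fun u hu => ?_⟩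
      · simp only [Multiset.count_add]; omega
      · simp only [Multiset.count_add, ha2 u hu]
  · rcases h2 with rfl | ⟨v2, hv2, ha2⟩
    · refine Or.inr ⟨v1, ?_, fun u hu => ?_⟩
      · simp only [Multiset.count_add]; omega
      · simp only [Multiset.count_add, ha1 u hu]
    · rcases le_total v1 v2 with h | h
      · refine Or.inr ⟨v2, ?_, fun u hu => ?_⟩
      
        · have h' : μ.count v2 ≤ μ'.count v2 := by
            rcases eq_or_lt_of_le h with rfl | h'
            · exact hv1.le
            · exact (ha1 v2 h').le
          simp only [Multiset.count_add]; omega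
        · simp only [Multiset.count_add, ha1 u (lt_of_le_of_lt h hu), ha2 u hu]
      · refine Or.inr ⟨v1, ?_, fun u hu => ?_⟩
        · have h' : ν.count v1 ≤ ν'.count v1 := by
            rcases eq_or_lt_of_le h with rfl | h'
            · exact hv2.le
            · exact (ha2 v1 h').le
          simp only [Multiset.count_add]; omega
        · simp only [Multiset.count_add, ha1 u hu, ha2 u (lt_of_le_of_lt h hu)]

lemma lex_of_counts : ∀ (a b : List ℕ), List.Pairwise (fun x y => y ≤ x) a →
    List.Pairwise (fun x y => y ≤ x) b →
    (∃ v, a.count v < b.count v ∧ ∀ u, v < u → a.count u = b.count u) →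
    List.Lex (· < ·) a b
  | [], b, _, _, ⟨v, hv, _⟩ => by
    cases b with
    | nil => simp at hv
    | cons y b' => exact List.Lex.nil
  | x :: a', b, ha, hb, ⟨v, hv, hab⟩ => by
    cases b with
    | nil => simp at hv
    | cons y b' =>
      rcases lt_trichotomy x y with h | h | h
      · exact List.Lex.rel h
      · subst h
        refine List.Lex.cons (lex_of_counts a' b' ha.of_cons hb.of_cons ⟨v, ?_, ?_⟩)
        · by_cases hvx : v = x <;>
            simp only [List.count_cons, hvx, beq_self_eq_true, if_true] at hv ⊢ <;>
            omega
        · intro u hu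
          have := hab u hu
          by_cases hux : u = x <;>
            simp only [List.count_cons, hux, beq_self_eq_true, if_true] at this ⊢ <;>
            omega
      · exfalso
        have hbcount : ∀ u, y < u → (y :: b').count u = 0 := by
          intro u hu
          rw [List.count_eq_zero]
          intro hmem
          rcases List.mem_cons.1 hmem with h' | hm
          · omega
          · have := List.rel_of_pairwise_cons hb hm
            omega
        rcases lt_or_ge v x with hvx | hvx
        · have h0 : (x :: a').count x = (y :: b').count x := hab x hvx
          have h1 : (y :: b').count x = 0 := hbcount x h
          rw [List.count_cons_self, h1] at h0
          omega
        · have hv0 : (y :: b').count v = 0 := hbcount v (lt_of_lt_of_le h hvx)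
          omega

lemma descSort_sorted (μ : Multiset ℕ) : List.Pairwise (fun x y => y ≤ x) (descSort μ) := by
  unfold descSort
  rw [List.pairwise_reverse]
  exact Multiset.pairwise_sort _ _

lemma count_descSort (μ : Multiset ℕ) (v : ℕ) : (descSort μ).count v = μ.count v := by
  rw [← Multiset.coe_count]
  unfold descSort
  rw [Multiset.coe_reverse, Multiset.sort_eq]

lemma Rrel.lex {μ ν : Multiset ℕ} (h : Rrel μ ν) :
    descSort μ = descSort ν ∨ List.Lex (· < ·) (descSort μ) (descSort ν) := by
  rcases h with rfl | ⟨v, hv, ha⟩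
  · exact Or.inl rfl
  · refine Or.inr (lex_of_counts _ _ (descSort_sorted μ) (descSort_sorted ν)
      ⟨v, ?_, fun u hu => ?_⟩)
    · simpa [count_descSort] using hv
    · simpa [count_descSort] using ha u hu

lemma count_greedy (m n u : ℕ) : (greedy m n).count u =
    (if m = u then n / m else 0) + if n % m = 0 then 0 else (if u = n % m then 1 else 0) := by
  unfold greedy
  split <;> simp [Multiset.count_replicate, Multiset.count_singleton]

lemma row_lemma (m n : ℕ) (hm : 0 < m) (ν : Multiset ℕ) (hpos : ∀ x ∈ ν, 0 < x)
    (hle : ∀ x ∈ ν, x ≤ m) (hsum : ν.sum = n) : Rrel ν (greedy m n) := by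
  classical
  have hν : Multiset.replicate (ν.count m) m + ν.filter (fun x => ¬ x = m) = ν := by
    rw [← Multiset.filter_eq' ν m]
    exact Multiset.filter_add_not _ _
  have hsum' : ν.count m * m + (ν.filter (fun x => ¬ x = m)).sum = n := by
    have := congrArg Multiset.sum hν
    rw [Multiset.sum_add, Multiset.sum_replicate, smul_eq_mul] at this
    omega
  have hfle : ∀ x ∈ ν.filter (fun x => ¬ x = m), x ≤ m := fun x hx =>
    hle x (Multiset.mem_of_mem_filter hx)
  have hfpos : ∀ x ∈ ν.filter (fun x => ¬ x = m), 0 < x := fun x hx =>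
    hpos x (Multiset.mem_of_mem_filter hx)
  have hcle : ν.count m ≤ n / m := by
    have : ν.count m * m ≤ n := by omega
    exact (Nat.le_div_iff_mul_le hm).2 this
  rcases lt_or_eq_of_le hcle with hlt | heq
  · -- fewer parts equal to m than greedy: strictly smaller already at m
    refine Or.inr ⟨m, ?_, fun u hu => ?_⟩
    · rw [count_greedy]
      have hmod : n % m < m := Nat.mod_lt _ hm
      split_ifs <;> omega
    · have h1 : ν.count u = 0 := Multiset.count_eq_zero.2 fun hmem => by
        have := hle u hmem; omega
      have hmod : n % m < m := Nat.mod_lt _ hm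
      rw [h1, count_greedy]
      split_ifs <;> omega
  · -- exactly n / m parts equal to m
    set ν' := ν.filter (fun x => ¬ x = m) with hν'def
    have hsumν' : ν'.sum = n % m := by
      have hdm := Nat.div_add_mod n m
      rw [heq, mul_comm] at hsum'
      omega
    have hν'le : ∀ x ∈ ν', x ≤ n % m := by
      intro x hx
      have := Multiset.single_le_sum (fun y hy => Nat.zero_le y) x hx
      omega
    rcases Nat.eq_zero_or_pos (n % m) with h0 | h0
    · -- remainder zero: ν' must be empty, so ν is exactly greedy
      have hν'0 : ν' = 0 := by
        rw [Multiset.eq_zero_iff_forall_notMem]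
        intro x hx
        have := hfpos x hx
        have := hν'le x hx
        omega
      left
      rw [← hν, hν'0, add_zero, heq]
      unfold greedy
      rw [if_pos h0, add_zero]
    · by_cases hsing : ν' = {n % m}
      · left
        have hmod : n % m < m := Nat.mod_lt _ hm
        rw [← hν, hsing, heq]
        unfold greedy
        rw [if_neg (by omega)]
      · refine Or.inr ⟨n % m, ?_, fun u hu => ?_⟩
        · have hmod : n % m < m := Nat.mod_lt _ hm
          have hcount0 : ν'.count (n % m) = 0 := by
            rw [Multiset.count_eq_zero]
            intro hmem
            apply hsing
            have hcons := Multiset.cons_erase hmem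
            have hsum0 : (ν'.erase (n % m)).sum = 0 := by
              have := congrArg Multiset.sum hcons
              rw [Multiset.sum_cons] at this
              omega
            have her0 : ν'.erase (n % m) = 0 := by
              rw [Multiset.eq_zero_iff_forall_notMem]
              intro x hx
              have h1 : 0 < x := hfpos x (Multiset.mem_of_le (Multiset.erase_le _ _) hx)
              have h2 : x ≤ (ν'.erase (n % m)).sum :=
                Multiset.single_le_sum (fun y _ => Nat.zero_le y) x hx
              omega
            rw [← hcons, her0]
            rfl
          have hcountν : ν.count (n % m) = 0 := by
            rw [← hν, Multiset.count_add, Multiset.count_replicate,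
              if_neg (by omega), hcount0]
          rw [hcountν, count_greedy, if_neg (by omega), if_neg (by omega), if_pos rfl]
          omega
        · have hmod : n % m < m := Nat.mod_lt _ hm
          have hν'u : ν'.count u = 0 := Multiset.count_eq_zero.2 fun hmem => by
            have := hν'le u hmem; omega
          rw [← hν, Multiset.count_add, Multiset.count_replicate, count_greedy, hν'u,
            if_neg (show ¬ n % m = 0 by omega), if_neg (show ¬ u = n % m by omega)]
          by_cases hmu : m = u
          · subst hmu; simp [heq]
          · simp [hmu]

lemma Lmap_nil (p : ℕ) : Lmap p 0 = 0 := by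
  simp [Lmap]

lemma Lmap_cons (p a : ℕ) (l : List ℕ) :
    Lmap p ↑(a :: l) = greedy (p + 1) a + Lmap p ↑l := by
  unfold Lmap greedy
  rw [← Multiset.cons_coe, Multiset.map_cons, Multiset.map_cons, Multiset.sum_cons,
    Multiset.filter_cons, Multiset.replicate_add]
  have : (if (fun x => x ≠ 0) (a % (p + 1)) then ({a % (p + 1)} : Multiset ℕ) else 0) =
      if a % (p + 1) = 0 then 0 else {a % (p + 1)} := by
    by_cases h : a % (p + 1) = 0 <;> simp [h]
  rw [this]
  abel

/-- canonical greedy composition of a row -/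
def g (m x : ℕ) : List ℕ := List.replicate (x / m) m ++ if x % m = 0 then [] else [x % m]

lemma g_pos (m x : ℕ) (hm : 0 < m) : ∀ y ∈ g m x, 0 < y := by
  intro y hy
  unfold g at hy
  rcases List.mem_append.1 hy with h | h
  · have := List.eq_of_mem_replicate h
    omega
  · split at h
    · simp at h
    · rename_i hne
      rw [List.mem_singleton] at h
      omega

lemma g_sum (m x : ℕ) : (g m x).sum = x := by
  have hdm := Nat.div_add_mod x m
  unfold g
  rw [List.sum_append, List.sum_replicate, smul_eq_mul, mul_comm]
  split
  · rename_i h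
    simp only [List.sum_nil]
    omega
  · simp only [List.sum_cons, List.sum_nil]
    omega

lemma g_coe (m x : ℕ) : (↑(g m x) : Multiset ℕ) = greedy m x := by
  unfold g greedy
  split <;> simp [← Multiset.coe_replicate] <;> rfl

lemma flatten_g (p : ℕ) : ∀ l : List ℕ,
    (↑(l.map (g (p + 1))).flatten : Multiset ℕ) = Lmap p ↑l
  | [] => by
    show (0 : Multiset ℕ) = Lmap p 0
    rw [Lmap_nil]
  | a :: l => by
    rw [List.map_cons, List.flatten_cons, Lmap_cons, ← flatten_g p l, ← g_coe]
    rfl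

lemma main_R (p : ℕ) : ∀ (c : List (List ℕ)) (l : List ℕ),
    List.Forall₂ (fun comp row => (∀ x ∈ comp, 0 < x) ∧ comp.sum = row) c l →
    (∀ x ∈ c.flatten, x ≤ p + 1) →
    Rrel (↑c.flatten) (Lmap p ↑l) := by
  intro c l h
  induction h with
  | nil =>
    intro _
    show Rrel 0 (Lmap p 0)
    rw [Lmap_nil]
    exact Or.inl rfl
  | @cons comp row c' l' hcr htail ih =>
    intro hle
    rw [List.flatten_cons, Lmap_cons]
    have hco : (↑(comp ++ c'.flatten) : Multiset ℕ) = ↑comp + ↑c'.flatten := rfl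
    rw [hco]
    have h1 : ∀ x ∈ (↑comp : Multiset ℕ), x ≤ p + 1 := by
      intro x hx
      rw [Multiset.mem_coe] at hx
      exact hle x (List.mem_flatten.2 ⟨comp, List.mem_cons_self, hx⟩)
    have h2 : ∀ x ∈ c'.flatten, x ≤ p + 1 := by
      intro x hx
      rcases List.mem_flatten.1 hx with ⟨t, ht, hxt⟩
      exact hle x (List.mem_flatten.2 ⟨t, List.mem_cons_of_mem _ ht, hxt⟩)
    exact Rrel.add (row_lemma (p + 1) row (Nat.succ_pos p) _ hcr.1 h1 hcr.2) (ih h2)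

lemma finite_aux (l : List ℕ) (μ : Multiset ℕ) :
    Finite {c : List (List ℕ) //
      List.Forall₂ (fun comp row => (∀ x ∈ comp, 0 < x) ∧ comp.sum = row) c l ∧
      (↑c.flatten : Multiset ℕ) = μ} := by
  refine Finite.of_injective (β := ∀ i : Fin l.length, Composition (l.get i))
    (fun s i =>
      ⟨s.1.get ⟨i.val, by rw [s.2.1.length_eq]; exact i.isLt⟩,
        fun {j} hj =>
          ((List.forall₂_iff_get.1 s.2.1).2 i.val
            (by rw [s.2.1.length_eq]; exact i.isLt) i.isLt).1 j hj,
        ((List.forall₂_iff_get.1 s.2.1).2 i.val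
          (by rw [s.2.1.length_eq]; exact i.isLt) i.isLt).2⟩) ?_
  intro s t h
  have hls := s.2.1.length_eq
  have hlt := t.2.1.length_eq
  apply Subtype.ext
  apply List.ext_get (by omega)
  intro i h1 h2
  have h3 : i < l.length := by omega
  have := congrArg Composition.blocks (congrFun h ⟨i, h3⟩)
  exact this

end Stmt6Aux

theorem stmt_6 (k p : ℕ) (hk : 1 ≤ k) (l : List ℕ)
    (hparts : ∀ x ∈ l, k ≤ x ∧ x ≤ k + p) :
    dominoCount l (Lmap p ↑l) ≠ 0 ∧
    ∀ μ : Multiset ℕ, (∀ x ∈ μ, x ≤ p + 1) → dominoCount l μ ≠ 0 →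
      descSort μ = descSort (Lmap p ↑l) ∨
        List.Lex (· < ·) (descSort μ) (descSort (Lmap p ↑l)) := by
  constructor
  · unfold dominoCount
    rw [Nat.card_ne_zero]
    refine ⟨⟨⟨l.map (Stmt6Aux.g (p + 1)), ?_, ?_⟩⟩, Stmt6Aux.finite_aux l _⟩
    · rw [List.forall₂_map_left_iff, List.forall₂_same]
      intro x _
      exact ⟨Stmt6Aux.g_pos _ _ (Nat.succ_pos p), Stmt6Aux.g_sum _ _⟩
    · exact Stmt6Aux.flatten_g p l
  · intro μ hμle hne
    unfold dominoCount at hne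
    rw [Nat.card_ne_zero] at hne
    obtain ⟨⟨c, hc, hflat⟩⟩ := hne.1
    subst hflat
    apply Stmt6Aux.Rrel.lex
    apply Stmt6Aux.main_R p c l hc
    intro x hx
    exact hμle x (Multiset.mem_coe.2 hx)
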